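/- Let K be a field and let H11 (n1×m1), H12 (n1×m2), H21 (n2×m1), H22 (n2×m2) be matrices over K satisfying rank([H11 | H12]) = n1, rank([H21 | H22]) = n2, rank([H11; H21]) = m1, and rank([H12; H22]) = m2. Let B = [[H11, H12],[H21, 0]] and C = [[H21, H22],[0, H12]]. If R1, R2 are nonnegative real numbers with R2 ≤ rank(H22) and R1 + 2R2 ≤ rank(H11), then all of the following hold: R1 ≤ rank(H11); R2 ≤ rank(H22); R1+R2 ≤ n1+m2−rank(H12); R1+R2 ≤ n2+m1−rank(H21); R1+R2 ≤ rank(B)+rank(C)−rank(H12)−rank(H21); 2R1+R2 ≤ n1+m1+rank(C)−rank(H12)−rank(H21); and R1+2R2 ≤ n2+m2+rank(B)−rank(H12)−rank(H21). -/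

import Mathlib

open Matrix Module

/-- Abstract dimension-count: if `S ≤ ker (p ∘ f)`, then
`finrank (range (p ∘ f)) + finrank (f '' S) ≤ finrank (range f)`. -/
private lemma aux_finrank {K V W U : Type*} [Field K]
    [AddCommGroup V] [Module K V] [AddCommGroup W] [Module K W]
    [AddCommGroup U] [Module K U] [FiniteDimensional K V]
    (f : V →ₗ[K] W) (p : W →ₗ[K] U) (S : Submodule K V)
    (hS : S ≤ LinearMap.ker (p.comp f)) :
    finrank K (LinearMap.range (p.comp f)) + finrank K (S.map f)
      ≤ finrank K (LinearMap.range f) := by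
  classical
  let g : (LinearMap.range f) →ₗ[K] U := p.domRestrict (LinearMap.range f)
  have hrange : LinearMap.range g = LinearMap.range (p.comp f) := by
    rw [LinearMap.range_domRestrict, LinearMap.range_comp]
  have hle : S.map f ≤ LinearMap.range f := by
    rintro w ⟨s, _, rfl⟩; exact ⟨s, rfl⟩
  let T : Submodule K (LinearMap.range f) := (S.map f).comap (LinearMap.range f).subtype
  have hTfin : finrank K T = finrank K (S.map f) :=
    (Submodule.comapSubtypeEquivOfLe hle).finrank_eq
  have hTker : T ≤ LinearMap.ker g := by
    rintro ⟨w, hw⟩ hT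
    obtain ⟨s, hs, hfs⟩ : ∃ s ∈ S, f s = w := hT
    have : p w = 0 := by
      rw [← hfs]
      exact hS hs
    simpa [g, LinearMap.mem_ker, LinearMap.domRestrict_apply] using this
  have hTle : finrank K T ≤ finrank K (LinearMap.ker g) := Submodule.finrank_mono hTker
  have hrn : finrank K (LinearMap.range g) + finrank K (LinearMap.ker g)
      = finrank K (LinearMap.range f) := LinearMap.finrank_range_add_finrank_ker g
  rw [← hrange, ← hrn, ← hTfin]
  omega

open LinearMap in
/-- Rank lower bound for a block matrix with zero lower-left block. -/
private lemma aux_rank_fromBlocks {K : Type*} [Field K] {n1 n2 m1 m2 : Type*}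
    [Fintype n1] [Fintype n2] [Fintype m1] [Fintype m2]
    (A : Matrix n1 m1 K) (B : Matrix n1 m2 K) (D : Matrix n2 m2 K) :
    A.rank + D.rank ≤ (Matrix.fromBlocks A B (0 : Matrix n2 m1 K) D).rank := by
  classical
  let M := Matrix.fromBlocks A B (0 : Matrix n2 m1 K) D
  let f : ((m1 ⊕ m2) → K) →ₗ[K] ((n1 ⊕ n2) → K) := M.mulVecLin
  let p : ((n1 ⊕ n2) → K) →ₗ[K] (n2 → K) := LinearMap.funLeft K K Sum.inr
  let j : (m1 → K) →ₗ[K] ((m1 ⊕ m2) → K) :=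
    { toFun := fun x => Sum.elim x 0
      map_add' := by intro x y; funext i; cases i <;> simp
      map_smul' := by intro c x; funext i; cases i <;> simp }
  have hfj : ∀ x : m1 → K, f (j x) = Sum.elim (A.mulVec x) 0 := by
    intro x
    show M.mulVec (Sum.elim x 0) = _
    rw [Matrix.fromBlocks_mulVec]
    congr 1 <;> simp [Sum.elim_comp_inl, Sum.elim_comp_inr]
  have hS : LinearMap.range j ≤ LinearMap.ker (p.comp f) := by
    rintro v ⟨x, rfl⟩
    have : p (f (j x)) = 0 := by
      rw [hfj]
      funext i
      simp [p, LinearMap.funLeft]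
    simpa [LinearMap.mem_ker] using this
  have key := aux_finrank f p (LinearMap.range j) hS
  -- identify the dimension of the range of `p ∘ f` with the rank of `D`
  have hpf : p.comp f = D.mulVecLin.comp (LinearMap.funLeft K K Sum.inr) := by
    apply LinearMap.ext; intro x
    simp [p, f, M, Matrix.fromBlocks_mulVec, LinearMap.funLeft]
  have hD : finrank K (LinearMap.range (p.comp f)) = D.rank := by
    rw [hpf, LinearMap.range_comp,
      LinearMap.range_eq_top.mpr
        (LinearMap.funLeft_surjective_of_injective K K _ Sum.inr_injective),
      Submodule.map_top]
    rfl
  -- the dimension of `f '' (range j)` is at least the rank of `A`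
  have hAeq : A.mulVecLin = (LinearMap.funLeft K K Sum.inl).comp (f.comp j) := by
    apply LinearMap.ext; intro x
    rw [LinearMap.comp_apply, LinearMap.comp_apply, hfj]
    funext i
    simp [LinearMap.funLeft, Matrix.mulVecLin_apply]
  have hA : A.rank ≤ finrank K ((LinearMap.range j).map f) := by
    have h1 : A.rank
        = finrank K (LinearMap.range ((LinearMap.funLeft K K Sum.inl).comp (f.comp j))) := by
      rw [← hAeq]; rfl
    rw [h1, LinearMap.range_comp, LinearMap.range_comp]
    exact Submodule.finrank_map_le _ _
  have hM : M.rank = finrank K (LinearMap.range f) := rfl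
  have hM' : (Matrix.fromBlocks A B (0 : Matrix n2 m1 K) D).rank = M.rank := rfl
  omega

private lemma aux_rank_submatrix_col {K : Type*} [Field K] {a b b' : Type*}
    [Fintype a] [Fintype b] [Fintype b'] (M : Matrix a b K) (h : b' → b) :
    (M.submatrix _root_.id h).rank ≤ M.rank := by
  classical
  have : M.submatrix _root_.id h
      = M * (Matrix.of fun k j => if k = h j then (1 : K) else 0) := by
    ext i j
    simp [Matrix.mul_apply, mul_ite, Finset.sum_ite_eq']
  rw [this]
  exact Matrix.rank_mul_le_left _ _

private lemma aux_rank_submatrix_le {K : Type*} [Field K] {m n m' n' : Type*}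
    [Fintype m] [Fintype n] [Fintype m'] [Fintype n']
    (A : Matrix m n K) (f : m' → m) (g : n' → n) :
    (A.submatrix f g).rank ≤ A.rank := by
  classical
  have row : (A.submatrix f _root_.id).rank ≤ A.rank := by
    have ht : A.submatrix f _root_.id = (Aᵀ.submatrix _root_.id f)ᵀ := by
      ext i j; rfl
    rw [ht, Matrix.rank_transpose]
    calc (Aᵀ.submatrix _root_.id f).rank ≤ Aᵀ.rank := aux_rank_submatrix_col Aᵀ f
    _ = A.rank := Matrix.rank_transpose A
  have hsub : A.submatrix f g = (A.submatrix f _root_.id).submatrix _root_.id g := by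
    ext i j; rfl
  rw [hsub]
  exact le_trans (aux_rank_submatrix_col _ g) row

/-- Region 5 of Erez et al. lies inside the capacity region of the two-user linear
deterministic interference channel. -/
theorem region_subset_capacity_18 {K : Type*} [Field K] {n1 n2 m1 m2 : ℕ}
    (H11 : Matrix (Fin n1) (Fin m1) K) (H12 : Matrix (Fin n1) (Fin m2) K)
    (H21 : Matrix (Fin n2) (Fin m1) K) (H22 : Matrix (Fin n2) (Fin m2) K)
    (ha1 : (Matrix.fromCols H11 H12).rank = n1)
    (ha2 : (Matrix.fromCols H21 H22).rank = n2)
    (ha3 : (Matrix.fromRows H11 H21).rank = m1)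
    (ha4 : (Matrix.fromRows H12 H22).rank = m2)
    (R1 R2 : ℝ) (hR1 : 0 ≤ R1) (hR2 : 0 ≤ R2)
    (h1 : R2 ≤ (H22.rank : ℝ))
    (h2 : R1 + 2 * R2 ≤ (H11.rank : ℝ)) :
    R1 ≤ (H11.rank : ℝ) ∧ R2 ≤ (H22.rank : ℝ) ∧
    R1 + R2 ≤ (n1 : ℝ) + (m2 : ℝ) - (H12.rank : ℝ) ∧
    R1 + R2 ≤ (n2 : ℝ) + (m1 : ℝ) - (H21.rank : ℝ) ∧
    R1 + R2 ≤ ((Matrix.fromBlocks H11 H12 H21 (0 : Matrix (Fin n2) (Fin m2) K)).rank : ℝ) +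
      ((Matrix.fromBlocks H21 H22 (0 : Matrix (Fin n1) (Fin m1) K) H12).rank : ℝ) -
      (H12.rank : ℝ) - (H21.rank : ℝ) ∧
    2 * R1 + R2 ≤ (n1 : ℝ) + (m1 : ℝ) +
      ((Matrix.fromBlocks H21 H22 (0 : Matrix (Fin n1) (Fin m1) K) H12).rank : ℝ) -
      (H12.rank : ℝ) - (H21.rank : ℝ) ∧
    R1 + 2 * R2 ≤ (n2 : ℝ) + (m2 : ℝ) +
      ((Matrix.fromBlocks H11 H12 H21 (0 : Matrix (Fin n2) (Fin m2) K)).rank : ℝ) -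
      (H12.rank : ℝ) - (H21.rank : ℝ) := by
  have f1 : H11.rank ≤ n1 := by simpa using Matrix.rank_le_card_height H11
  have f2 : H11.rank ≤ m1 := by simpa using Matrix.rank_le_card_width H11
  have f3 : H12.rank ≤ m2 := by simpa using Matrix.rank_le_card_width H12
  have f4 : H21.rank ≤ n2 := by simpa using Matrix.rank_le_card_height H21
  have f5 : H11.rank ≤ (Matrix.fromBlocks H11 H12 H21 (0 : Matrix (Fin n2) (Fin m2) K)).rank := by
    have hs : H11 = (Matrix.fromBlocks H11 H12 H21
        (0 : Matrix (Fin n2) (Fin m2) K)).submatrix Sum.inl Sum.inl := by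
      ext i j; rfl
    rw [hs]
    exact aux_rank_submatrix_le _ Sum.inl Sum.inl
  have f6 : H21.rank + H12.rank ≤
      (Matrix.fromBlocks H21 H22 (0 : Matrix (Fin n1) (Fin m1) K) H12).rank :=
    aux_rank_fromBlocks H21 H22 H12
  have c1 := (Nat.cast_le (α := ℝ)).mpr f1
  have c2 := (Nat.cast_le (α := ℝ)).mpr f2
  have c3 := (Nat.cast_le (α := ℝ)).mpr f3
  have c4 := (Nat.cast_le (α := ℝ)).mpr f4
  have c5 := (Nat.cast_le (α := ℝ)).mpr f5
  have c6 := (Nat.cast_le (α := ℝ)).mpr f6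
  push_cast at c1 c2 c3 c4 c5 c6
  refine ⟨by linarith, h1, by linarith, by linarith, by linarith, by linarith, by linarith⟩
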